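/- Let n ≥ 4 be even and let F(x) = cosh(x)/sinh²(x). For all pairwise distinct real numbers x₁, …, xₙ, one has Σ_{j=1}^n Σ_{k≠j} F'(x_j - x_k) Π_{l≠j,l≠k} F(x_j - x_l) = 0. -/

import Mathlib

open Finset Polynomial


lemma derivF (z : ℝ) (hz : z ≠ 0) :
    deriv (fun t => Real.cosh t / Real.sinh t ^ 2) z =
      (Real.sinh z ^ 2 - 2 * Real.cosh z ^ 2) / Real.sinh z ^ 3 := by
  have hs : Real.sinh z ≠ 0 := Real.sinh_ne_zero.2 hz
  have h1 : HasDerivAt (fun t => Real.cosh t / Real.sinh t ^ 2)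
      ((Real.sinh z * Real.sinh z ^ 2 - Real.cosh z * (2 * Real.sinh z ^ 1 * Real.cosh z)) / (Real.sinh z ^ 2) ^ 2) z := by
    exact (Real.hasDerivAt_cosh z).div ((Real.hasDerivAt_sinh z).pow 2) (pow_ne_zero 2 hs)
  rw [h1.deriv]
  field_simp


lemma polyDerivProd {ι : Type*} [DecidableEq ι] (s : Finset ι) (f : ι → Polynomial ℝ) :
    derivative (∏ i ∈ s, f i) = ∑ i ∈ s, (∏ j ∈ s.erase i, f j) * derivative (f i) := by
  classical
  induction s using Finset.induction_on with
  | empty => simp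
  | insert a s hx ih =>
    rw [Finset.prod_insert hx, derivative_mul, ih, Finset.mul_sum, Finset.sum_insert hx,
      Finset.erase_insert hx, mul_comm (derivative (f a))]
    congr 1
    refine Finset.sum_congr rfl fun b hb => ?_
    rw [Finset.erase_insert_of_ne (by rintro rfl; exact hx hb),
      Finset.prod_insert (fun h => hx (Finset.mem_of_mem_erase h))]
    ring

lemma sq_dvd_of_root_of_deriv_root {p : Polynomial ℝ} {a : ℝ}
    (h0 : p.eval a = 0) (h1 : p.derivative.eval a = 0) : (X - C a) ^ 2 ∣ p := by
  obtain ⟨r, hr⟩ := dvd_iff_isRoot.2 h0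
  have hr' : p.derivative = r + (X - C a) * derivative r := by
    rw [hr, derivative_mul]
    simp only [derivative_X_sub_C]
    ring
  have : r.eval a = 0 := by
    have h2 := h1
    rw [hr'] at h2
    simpa using h2
  obtain ⟨t, ht⟩ := dvd_iff_isRoot.2 this
  exact ⟨t, by rw [hr, ht]; ring⟩

lemma residue_sum (n : ℕ) (w : Fin n → ℝ) (hw : Function.Injective w)
    (P : Polynomial ℝ) (hP : P.natDegree + 1 < 2 * n) :
    ∑ j : Fin n,
      (P.derivative.eval (w j) * (∏ k ∈ univ.erase j, (w j - w k))
        - 2 * P.eval (w j) * ∑ k ∈ univ.erase j, ∏ l ∈ (univ.erase j).erase k, (w j - w l))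
        / (∏ k ∈ univ.erase j, (w j - w k)) ^ 3 = 0 := by
  classical
  have hn : 1 ≤ n := by omega
  set d : Fin n → ℝ := fun j => ∏ k ∈ univ.erase j, (w j - w k) with hd_def
  set e : Fin n → ℝ := fun j => ∑ k ∈ univ.erase j, ∏ l ∈ (univ.erase j).erase k, (w j - w l)
    with he_def
  have hdne : ∀ j, d j ≠ 0 := by
    intro j
    refine Finset.prod_ne_zero_iff.2 fun k hk => sub_ne_zero.2 ?_
    exact hw.ne (Finset.ne_of_mem_erase hk).symm
  set Dj : Fin n → Polynomial ℝ := fun j => ∏ k ∈ univ.erase j, (X - C (w k)) with hDj_def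
  have hDj_monic : ∀ j, (Dj j).Monic := fun j =>
    monic_prod_of_monic _ _ fun k _ => monic_X_sub_C _
  have hDj_deg : ∀ j, (Dj j).natDegree = n - 1 := by
    intro j
    rw [hDj_def]
    rw [natDegree_prod_of_monic _ _ fun k _ => monic_X_sub_C (w k)]
    simp [Finset.card_erase_of_mem]
  have hDj_eval : ∀ j, (Dj j).eval (w j) = d j := by
    intro j; simp [hDj_def, eval_prod, hd_def]
  have hDj_eval_zero : ∀ i j : Fin n, i ≠ j → (Dj j).eval (w i) = 0 := by
    intro i j hij
    rw [hDj_def, eval_prod]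
    refine Finset.prod_eq_zero (Finset.mem_erase.2 ⟨hij, Finset.mem_univ i⟩) ?_
    simp
  have hDj_deriv_eval : ∀ j, (Dj j).derivative.eval (w j) = e j := by
    intro j
    rw [hDj_def, polyDerivProd, eval_finset_sum]
    refine Finset.sum_congr rfl fun k hk => ?_
    simp [eval_prod]
  set A : Fin n → ℝ := fun j => P.eval (w j) / (d j) ^ 2 with hA_def
  set B : Fin n → ℝ := fun j =>
    (P.derivative.eval (w j) * d j - 2 * P.eval (w j) * e j) / (d j) ^ 3 with hB_def
  set R : Polynomial ℝ :=
    ∑ j : Fin n, (C (A j) * (Dj j) ^ 2 + C (B j) * ((X - C (w j)) * (Dj j) ^ 2)) with hR_def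
  have hq0 : ∀ i, (P - R).eval (w i) = 0 := by
    intro i
    rw [eval_sub, hR_def, eval_finset_sum]
    rw [Finset.sum_eq_single i]
    · simp only [eval_add, eval_mul, eval_C, eval_pow, eval_sub, eval_X, hDj_eval, sub_self,
        zero_mul, mul_zero, add_zero]
      rw [hA_def]
      beta_reduce
      rw [div_mul_cancel₀ _ (pow_ne_zero 2 (hdne i)), sub_self]
    · intro j _ hji
      simp [hDj_eval_zero i j (Ne.symm hji)]
    · intro h; exact absurd (Finset.mem_univ i) h
  have hq1 : ∀ i, (P - R).derivative.eval (w i) = 0 := by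
    intro i
    rw [derivative_sub, eval_sub, hR_def, derivative_sum, eval_finset_sum]
    have hterm : ∀ j : Fin n,
        (derivative (C (A j) * (Dj j) ^ 2 + C (B j) * ((X - C (w j)) * (Dj j) ^ 2))).eval (w i)
        = A j * (2 * (Dj j).eval (w i) * (Dj j).derivative.eval (w i))
          + B j * ((Dj j).eval (w i) ^ 2
            + (w i - w j) * (2 * (Dj j).eval (w i) * (Dj j).derivative.eval (w i))) := by
      intro j
      rw [derivative_add, derivative_C_mul, derivative_C_mul, derivative_mul, derivative_pow,
        derivative_X_sub_C]
      simp only [eval_add, eval_mul, eval_pow, eval_sub, eval_X, eval_C, eval_one, eval_natCast]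
      push_cast
      ring
    rw [Finset.sum_congr rfl fun j _ => hterm j]
    rw [Finset.sum_eq_single i]
    · rw [hDj_eval, hDj_deriv_eval, sub_self, zero_mul, add_zero]
      have hkey : A i * (2 * d i * e i) + B i * d i ^ 2 = eval (w i) (derivative P) := by
        rw [hA_def, hB_def]
        field_simp [hdne i]
        ring
      rw [hkey, sub_self]
    · intro j _ hji
      rw [hDj_eval_zero i j (Ne.symm hji)]
      ring
    · intro h; exact absurd (Finset.mem_univ i) h
  have hdvd : (∏ i : Fin n, (X - C (w i)) ^ 2) ∣ P - R := by
    refine Finset.prod_dvd_of_coprime ?_ fun i _ => sq_dvd_of_root_of_deriv_root (hq0 i) (hq1 i)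
    intro i _ j _ hij
    exact (isCoprime_X_sub_C_of_isUnit_sub
      (IsUnit.mk0 _ (sub_ne_zero.2 (hw.ne hij)))).pow
  have hRdeg : R.natDegree ≤ 2 * n - 1 := by
    refine natDegree_sum_le_of_forall_le _ _ fun j _ => ?_
    refine le_trans (natDegree_add_le _ _) (max_le ?_ ?_)
    · refine le_trans (natDegree_C_mul_le _ _) ?_
      rw [natDegree_pow, hDj_deg]
      omega
    · refine le_trans (natDegree_C_mul_le _ _) ?_
      refine le_trans (natDegree_mul_le) ?_
      rw [natDegree_pow, hDj_deg, natDegree_X_sub_C]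
      omega
  have hqz : P - R = 0 := by
    by_contra hq
    have h1 := Polynomial.natDegree_le_of_dvd hdvd hq
    have h2 : (∏ i : Fin n, (X - C (w i)) ^ 2).natDegree = 2 * n := by
      rw [natDegree_prod_of_monic _ _ fun i _ => (monic_X_sub_C (w i)).pow _]
      simp [natDegree_pow]
      ring
    have h3 := Polynomial.natDegree_sub_le P R
    have h4 : (P - R).natDegree ≤ 2 * n - 1 := le_trans h3 (max_le (by omega) hRdeg)
    omega
  have hPR : P = R := sub_eq_zero.1 hqz
  have hcoeff : P.coeff (2 * n - 1) = ∑ j : Fin n, B j := by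
    rw [hPR, hR_def, finset_sum_coeff]
    refine Finset.sum_congr rfl fun j _ => ?_
    rw [coeff_add, coeff_C_mul, coeff_C_mul]
    have hdeg2 : ((Dj j) ^ 2).natDegree = 2 * n - 2 := by
      rw [natDegree_pow, hDj_deg]; omega
    have h1 : ((Dj j) ^ 2).coeff (2 * n - 1) = 0 := by
      apply coeff_eq_zero_of_natDegree_lt; omega
    have hmon : ((X - C (w j)) * (Dj j) ^ 2).Monic := (monic_X_sub_C _).mul ((hDj_monic j).pow _)
    have hdeg3 : ((X - C (w j)) * (Dj j) ^ 2).natDegree = 2 * n - 1 := by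
      rw [(monic_X_sub_C (w j)).natDegree_mul ((hDj_monic j).pow _), natDegree_X_sub_C, hdeg2]
      omega
    rw [h1, mul_zero, zero_add, ← hdeg3, hmon.coeff_natDegree, mul_one]
  have hPc : P.coeff (2 * n - 1) = 0 := by
    apply coeff_eq_zero_of_natDegree_lt; omega
  rw [← hcoeff, hPc]

/-- the new solution `F(x) = cosh(x)/sinh²(x)` satisfies
`∑ⱼ ∑_{k≠j} F'(xⱼ−x_k) ∏_{l≠j,k} F(xⱼ−x_l) = 0`
for every even `n ≥ 4` and all pairwise distinct real `x₁, …, xₙ`. -/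
theorem stmt_7 (n : ℕ) (hn : 4 ≤ n) (hneven : Even n) (x : Fin n → ℝ)
    (hx : Function.Injective x) :
    ∑ j : Fin n, ∑ k ∈ univ.erase j,
      deriv (fun t => Real.cosh t / Real.sinh t ^ 2) (x j - x k) *
        ∏ l ∈ (univ.erase j).erase k,
          Real.cosh (x j - x l) / Real.sinh (x j - x l) ^ 2 = 0 := by
  classical
  set a : Fin n → ℝ := fun j => Real.exp (x j) with ha_def
  set w : Fin n → ℝ := fun j => Real.exp (x j) ^ 2 with hw_def
  have hapos : ∀ j, 0 < a j := fun j => Real.exp_pos _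
  have hane : ∀ j, a j ≠ 0 := fun j => (hapos j).ne'
  have hwpos : ∀ j, 0 < w j := fun j => pow_pos (Real.exp_pos _) 2
  have hwa : ∀ j, w j = a j ^ 2 := fun j => rfl
  have hw : Function.Injective w := by
    intro i j h
    apply hx
    apply Real.exp_injective
    have h2 : a i ^ 2 = a j ^ 2 := h
    nlinarith [hapos i, hapos j]
  have hwne : ∀ {j k : Fin n}, j ≠ k → w j - w k ≠ 0 := fun h => sub_ne_zero.2 (hw.ne h)
  have hwadd : ∀ j k : Fin n, w j + w k ≠ 0 := fun j k => by positivity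
  obtain ⟨r, hr⟩ := hneven
  set m : ℕ := r - 1 with hm_def
  have h2m : 2 * m + 2 = n := by omega
  have hm1 : 1 ≤ m := by omega
  -- pointwise hyperbolic conversions
  have hsinh : ∀ j k : Fin n, Real.sinh (x j - x k) = (w j - w k) / (2 * (a j * a k)) := by
    intro j k
    rw [Real.sinh_eq, Real.exp_sub, neg_sub, Real.exp_sub]
    rw [hw_def, ha_def]
    field_simp [Real.exp_ne_zero]
  have hcosh : ∀ j k : Fin n, Real.cosh (x j - x k) = (w j + w k) / (2 * (a j * a k)) := by
    intro j k
    rw [Real.cosh_eq, Real.exp_sub, neg_sub, Real.exp_sub]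
    rw [hw_def, ha_def]
    field_simp [Real.exp_ne_zero]
  have hFq : ∀ j k : Fin n, j ≠ k →
      Real.cosh (x j - x k) / Real.sinh (x j - x k) ^ 2
        = 2 * a j * (a k * ((w j + w k) / (w j - w k) ^ 2)) := by
    intro j k hjk
    rw [hsinh, hcosh]
    have h1 : w j - w k ≠ 0 := hwne hjk
    have h2 : a j ≠ 0 := hane j
    have h3 : a k ≠ 0 := hane k
    field_simp
  have hFd : ∀ j k : Fin n, j ≠ k →
      deriv (fun t => Real.cosh t / Real.sinh t ^ 2) (x j - x k)
        = 2 * (a j * a k) * (((w j - w k) ^ 2 - 2 * (w j + w k) ^ 2) / (w j - w k) ^ 3) := by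
    intro j k hjk
    rw [derivF _ (sub_ne_zero.2 (hx.ne hjk)), hsinh, hcosh]
    have h1 : w j - w k ≠ 0 := hwne hjk
    have h2 : a j ≠ 0 := hane j
    have h3 : a k ≠ 0 := hane k
    field_simp
  -- integer m' with m = m' + 1
  obtain ⟨m', hm'⟩ : ∃ m', m = m' + 1 := ⟨m - 1, by omega⟩
  -- the polynomial
  set P : Polynomial ℝ := X ^ m * ∏ k : Fin n, (X + C (w k)) with hP_def
  have hQmonic : (∏ k : Fin n, (X + C (w k))).Monic :=
    monic_prod_of_monic _ _ fun k _ => monic_X_add_C _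
  have hPdeg : P.natDegree + 1 < 2 * n := by
    rw [hP_def, (monic_X_pow m).natDegree_mul hQmonic, natDegree_X_pow,
      natDegree_prod_of_monic _ _ fun k _ => monic_X_add_C _]
    simp only [natDegree_X_add_C, Finset.sum_const, Finset.card_univ, Fintype.card_fin,
      smul_eq_mul, mul_one]
    omega
  -- abbreviations
  set d : Fin n → ℝ := fun j => ∏ k ∈ univ.erase j, (w j - w k) with hd_def
  set πp : Fin n → ℝ := fun j => ∏ k ∈ univ.erase j, (w j + w k) with hπ_def
  set Fk : Fin n → Fin n → ℝ := fun j k => ∏ l ∈ (univ.erase j).erase k, (w j + w l) with hFk_def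
  set Ek : Fin n → Fin n → ℝ := fun j k => ∏ l ∈ (univ.erase j).erase k, (w j - w l) with hEk_def
  have hdne : ∀ j, d j ≠ 0 := by
    intro j
    refine Finset.prod_ne_zero_iff.2 fun k hk => hwne ?_
    exact (Finset.ne_of_mem_erase hk).symm
  have hEkne : ∀ j k, Ek j k ≠ 0 := by
    intro j k
    refine Finset.prod_ne_zero_iff.2 fun l hl => hwne ?_
    exact (Finset.ne_of_mem_erase (Finset.mem_of_mem_erase hl)).symm
  have hπk : ∀ j k, k ∈ univ.erase j → πp j = (w j + w k) * Fk j k := by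
    intro j k hk
    simp only [hπ_def, hFk_def]
    exact (Finset.mul_prod_erase _ _ hk).symm
  have hdk : ∀ j k, k ∈ univ.erase j → d j = (w j - w k) * Ek j k := by
    intro j k hk
    simp only [hd_def, hEk_def]
    exact (Finset.mul_prod_erase _ _ hk).symm
  have hcard : ∀ j : Fin n, (univ.erase j).card = 2 * m + 1 := by
    intro j
    rw [Finset.card_erase_of_mem (mem_univ j), Finset.card_univ, Fintype.card_fin]
    omega
  have hcard2 : ∀ j k : Fin n, k ∈ univ.erase j → ((univ.erase j).erase k).card = 2 * m := by
    intro j k hk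
    rw [Finset.card_erase_of_mem hk, hcard]
    omega
  -- evaluations of P
  have hPeval : ∀ j, P.eval (w j) = w j ^ m * (2 * w j * πp j) := by
    intro j
    rw [hP_def, eval_mul, eval_pow, eval_X, eval_prod]
    simp only [eval_add, eval_X, eval_C, hπ_def]
    rw [← Finset.mul_prod_erase univ (fun k => w j + w k) (mem_univ j)]
    ring
  have hP'eval : ∀ j, P.derivative.eval (w j)
      = (m : ℝ) * w j ^ (m - 1) * (2 * w j * πp j)
        + w j ^ m * (πp j + ∑ k ∈ univ.erase j, 2 * w j * Fk j k) := by
    intro j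
    rw [hP_def, derivative_mul, derivative_X_pow, polyDerivProd]
    simp only [eval_add, eval_mul, eval_pow, eval_X, eval_C, eval_finset_sum, eval_prod,
      derivative_add, derivative_X, derivative_C, add_zero, eval_one, mul_one]
    simp only [hπ_def, hFk_def]
    congr 1
    · rw [← Finset.mul_prod_erase univ (fun k => w j + w k) (mem_univ j)]
      ring
    · congr 1
      rw [← Finset.add_sum_erase univ _ (mem_univ j)]
      congr 1
      refine Finset.sum_congr rfl fun k hk => ?_
      have hjk : j ≠ k := (Finset.ne_of_mem_erase hk).symm
      have hjmem : j ∈ univ.erase k := Finset.mem_erase.2 ⟨hjk, mem_univ j⟩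
      rw [← Finset.mul_prod_erase _ (fun l => w j + w l) hjmem, Finset.erase_right_comm]
      ring
  -- the constant
  set C0 : ℝ := 2 ^ (2 * m + 1) * ∏ l : Fin n, a l with hC0_def
  -- the per-j G term
  set G : Fin n → Fin n → ℝ := fun j k =>
    w j ^ m * Fk j k * ((w j - w k) ^ 2 - 2 * (w j + w k) ^ 2) / ((w j - w k) ^ 3 * Ek j k ^ 2)
    with hG_def
  -- step 1 : per-pair conversion
  have step1 : ∀ j : Fin n, ∀ k ∈ univ.erase j,
      deriv (fun t => Real.cosh t / Real.sinh t ^ 2) (x j - x k) *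
        ∏ l ∈ (univ.erase j).erase k,
          Real.cosh (x j - x l) / Real.sinh (x j - x l) ^ 2 = C0 * G j k := by
    intro j k hk
    have hjk : j ≠ k := (Finset.ne_of_mem_erase hk).symm
    rw [hFd j k hjk]
    rw [Finset.prod_congr rfl fun l hl =>
      hFq j l (Finset.ne_of_mem_erase (Finset.mem_of_mem_erase hl)).symm]
    rw [Finset.prod_mul_distrib, Finset.prod_const, Finset.prod_mul_distrib,
      Finset.prod_div_distrib, Finset.prod_pow, hcard2 j k hk]
    have haprod : a j * (a k * ∏ l ∈ (univ.erase j).erase k, a l) = ∏ l : Fin n, a l := by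
      rw [Finset.mul_prod_erase _ _ hk, Finset.mul_prod_erase _ _ (mem_univ j)]
    simp only [hC0_def, hG_def, hFk_def, hEk_def]
    rw [← haprod]
    have hw2 : a j ^ (2 * m) = w j ^ m := by rw [pow_mul, ← hwa]
    have h1 : w j - w k ≠ 0 := hwne hjk
    have h2 : Ek j k ≠ 0 := hEkne j k
    simp only [hEk_def] at h2
    rw [mul_pow, hw2]
    field_simp
    ring
  -- step 2 : per-j sum matches the residue expression
  have step2 : ∀ j : Fin n, ∑ k ∈ univ.erase j, G j k =
      (P.derivative.eval (w j) * d j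
        - 2 * P.eval (w j) * ∑ k ∈ univ.erase j, Ek j k) / d j ^ 3 := by
    intro j
    rw [eq_div_iff (pow_ne_zero 3 (hdne j))]
    rw [Finset.sum_mul]
    have hterm2 : ∀ k ∈ univ.erase j, G j k * d j ^ 3 =
        w j ^ m * πp j * d j + 2 * w j ^ (m + 1) * (d j * Fk j k)
          - 4 * w j ^ (m + 1) * (πp j * Ek j k) := by
      intro k hk
      have hjk : j ≠ k := (Finset.ne_of_mem_erase hk).symm
      simp only [hG_def]
      rw [hπk j k hk, hdk j k hk]
      have h1 : w j - w k ≠ 0 := hwne hjk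
      have h2 : Ek j k ≠ 0 := hEkne j k
      field_simp
      ring
    rw [Finset.sum_congr rfl hterm2]
    rw [Finset.sum_sub_distrib, Finset.sum_add_distrib, Finset.sum_const, hcard]
    rw [← Finset.mul_sum, ← Finset.mul_sum]
    rw [hP'eval j, hPeval j]
    have hsum3 : (∑ k ∈ univ.erase j, 2 * w j * Fk j k) = 2 * w j * ∑ k ∈ univ.erase j, Fk j k :=
      by rw [Finset.mul_sum]
    rw [hsum3]
    have hpow1 : w j ^ (m - 1) * w j = w j ^ m := by
      rw [← pow_succ]
      congr 1
      omega
    have hcast : ((m : ℝ)) = (m' : ℝ) + 1 := by rw [hm']; push_cast; ring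
    have h4 : ∑ x ∈ univ.erase j, 4 * w j ^ (m + 1) * (πp j * Ek j x)
        = 4 * w j ^ (m + 1) * πp j * ∑ x ∈ univ.erase j, Ek j x := by
      rw [Finset.mul_sum]
      exact Finset.sum_congr rfl fun k _ => by ring
    rw [h4, nsmul_eq_mul, hm']
    simp only [Nat.add_sub_cancel]
    push_cast
    ring
  -- assemble
  have hmain : (∑ j : Fin n, ∑ k ∈ univ.erase j,
      deriv (fun t => Real.cosh t / Real.sinh t ^ 2) (x j - x k) *
        ∏ l ∈ (univ.erase j).erase k,
          Real.cosh (x j - x l) / Real.sinh (x j - x l) ^ 2)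
      = C0 * ∑ j : Fin n,
      (P.derivative.eval (w j) * (∏ k ∈ univ.erase j, (w j - w k))
        - 2 * P.eval (w j) * ∑ k ∈ univ.erase j, ∏ l ∈ (univ.erase j).erase k, (w j - w l))
        / (∏ k ∈ univ.erase j, (w j - w k)) ^ 3 := by
    rw [Finset.mul_sum]
    refine Finset.sum_congr rfl fun j _ => ?_
    rw [Finset.sum_congr rfl (step1 j), ← Finset.mul_sum, step2 j]
  rw [hmain, residue_sum n w hw P hPdeg, mul_zero]
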